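/- arXiv:0805.3917 — 3 statements merged into one kernel-verified Lean document; each statement's English description precedes it below -/
import Mathlib

section
/- Let ⟨·,·⟩₀ be a positive semidefinite sesquilinear form on a complex vector space V, and let P : V → V be a linear map satisfying ⟨Pφ, Pφ⟩₀ = ⟨Pφ, φ⟩₀ for all φ ∈ V. Then P maps the kernel N = {φ : ⟨φ,φ⟩₀ = 0} into itself, and the induced operator on the quotient inner product space V/N is bounded with norm at most 1, self-adjoint, and idempotent (i.e., extends to an orthogonal projection on the Hilbert space completion). -/
open scoped InnerProductSpace ComplexConjugate

theorem semidef_aux {V : Type} [SeminormedAddCommGroup V] [InnerProductSpace ℂ V]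
    (P : V →ₗ[ℂ] V) (hnorm : ∀ x, ‖P x‖ ≤ ‖x‖)
    (hsymm : ∀ a b : V, ⟪P a, b⟫_ℂ = ⟪a, P b⟫_ℂ)
    (hid : ∀ x : V, ‖P (P x) - P x‖ = 0) :
    ∃ (E : Type) (_ : NormedAddCommGroup E) (_ : InnerProductSpace ℂ E) (_ : CompleteSpace E)
      (q : V →ₗ[ℂ] E), (∀ x y : V, ⟪q x, q y⟫_ℂ = ⟪x, y⟫_ℂ) ∧ DenseRange q ∧
      ∃ P' : E →L[ℂ] E, ‖P'‖ ≤ 1 ∧ IsSelfAdjoint P' ∧ P' * P' = P' ∧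
        ∀ x, P' (q x) = q (P x) := by
  let E := UniformSpace.Completion V
  let e : V →L[ℂ] E := UniformSpace.Completion.toComplL
  have hd : DenseRange e := UniformSpace.Completion.denseRange_coe
  have hui : IsUniformInducing e := UniformSpace.Completion.isUniformInducing_coe V
  let Pc : V →L[ℂ] V := P.mkContinuous 1 (fun x => by simpa using hnorm x)
  have hPuc : UniformContinuous (⇑Pc) := Pc.uniformContinuous
  let g : E → E := UniformSpace.Completion.map (⇑Pc)
  have hgc : Continuous g := UniformSpace.Completion.continuous_map
  have hgcoe : ∀ x : V, g ((x : V) : E) = ((P x : V) : E) := fun x =>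
    UniformSpace.Completion.map_coe hPuc x
  let P' : E →L[ℂ] E :=
  { toFun := g
    map_add' := fun x y => by
      refine UniformSpace.Completion.induction_on₂ x y ?_ ?_
      · exact isClosed_eq (hgc.comp continuous_add)
          ((hgc.comp continuous_fst).add (hgc.comp continuous_snd))
      · intro a b
        rw [← UniformSpace.Completion.coe_add, hgcoe, hgcoe, hgcoe, map_add,
          UniformSpace.Completion.coe_add]
    map_smul' := fun r x => by
      simp only [RingHom.id_apply]
      refine UniformSpace.Completion.induction_on x ?_ ?_
      · exact isClosed_eq (hgc.comp (continuous_const_smul r))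
          ((continuous_const_smul r).comp hgc)
      · intro a
        rw [← UniformSpace.Completion.coe_smul, hgcoe, hgcoe, map_smul,
          UniformSpace.Completion.coe_smul]
    cont := hgc }
  have hPq : ∀ x : V, P' ((x : V) : E) = ((P x : V) : E) := hgcoe
  have hle : ∀ y : E, ‖P' y‖ ≤ ‖y‖ := by
    intro y
    refine UniformSpace.Completion.induction_on y ?_ ?_
    · exact isClosed_le P'.continuous.norm continuous_norm
    · intro x
      rw [hPq x, UniformSpace.Completion.norm_coe, UniformSpace.Completion.norm_coe]
      exact hnorm x
  have hP'norm : ‖P'‖ ≤ 1 := P'.opNorm_le_bound zero_le_one fun y => by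
    simpa using hle y
  have hsym : ∀ x y : E, ⟪P' x, y⟫_ℂ = ⟪x, P' y⟫_ℂ := by
    intro x y
    refine UniformSpace.Completion.induction_on₂ x y ?_ ?_
    · exact isClosed_eq
        (Continuous.inner (P'.continuous.comp continuous_fst) continuous_snd)
        (Continuous.inner continuous_fst (P'.continuous.comp continuous_snd))
    · intro a b
      rw [hPq a, hPq b, UniformSpace.Completion.inner_coe, UniformSpace.Completion.inner_coe]
      exact hsymm a b
  have hsa : IsSelfAdjoint P' :=
    ContinuousLinearMap.isSelfAdjoint_iff_isSymmetric.mpr fun x y => hsym x y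
  have hcoe_eq : ∀ x : V, ((P (P x) : V) : E) = ((P x : V) : E) := by
    intro x
    have hz : ((P (P x) - P x : V) : E) = 0 := by
      rw [← norm_eq_zero, UniformSpace.Completion.norm_coe]
      exact hid x
    rw [UniformSpace.Completion.coe_sub, sub_eq_zero] at hz
    exact hz
  have hidem : P' * P' = P' := by
    ext y
    simp only [ContinuousLinearMap.mul_apply]
    refine UniformSpace.Completion.induction_on y ?_ ?_
    · exact isClosed_eq (P'.continuous.comp P'.continuous) P'.continuous
    · intro x
      rw [hPq x, hPq (P x), hcoe_eq x]
  refine ⟨E, inferInstance, inferInstance, inferInstance, e.toLinearMap, ?_, ?_,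
    P', hP'norm, hsa, hidem, ?_⟩
  · intro x y
    exact UniformSpace.Completion.inner_coe x y
  · exact hd
  · intro x
    exact hPq x

/-- If `⟨·,·⟩₀` is a positive semidefinite Hermitian sesquilinear form
(linear in the first entry) on a complex vector space `V` and `P : V → V` is linear with
`⟨Pφ, Pφ⟩₀ = ⟨Pφ, φ⟩₀` for all `φ`, then `P` preserves the null space `N`, and on the Hilbert
space completion of `V/N` it induces an orthogonal projection (a self-adjoint idempotent
of norm at most 1). -/
theorem semidef_form_projection
    {V : Type} [AddCommGroup V] [Module ℂ V]
    (B : V → V → ℂ)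
    (haddl : ∀ x x' y, B (x + x') y = B x y + B x' y)
    (hsmull : ∀ (c : ℂ) x y, B (c • x) y = c * B x y)
    (hherm : ∀ x y, B x y = starRingEnd ℂ (B y x))
    (hpos : ∀ x, 0 ≤ (B x x).re)
    (P : V →ₗ[ℂ] V)
    (hP : ∀ φ, B (P φ) (P φ) = B (P φ) φ) :
    (∀ φ, B φ φ = 0 → B (P φ) (P φ) = 0) ∧
    (∀ φ, (B (P φ) (P φ)).re ≤ (B φ φ).re) ∧
    (∀ φ ψ, B (P φ) ψ = B φ (P ψ)) ∧
    (∀ φ, B (P (P φ) - P φ) (P (P φ) - P φ) = 0) ∧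
    ∃ (E : Type) (_ : NormedAddCommGroup E) (_ : InnerProductSpace ℂ E) (_ : CompleteSpace E)
      (q : V →ₗ[ℂ] E), (∀ x y, ⟪q x, q y⟫_ℂ = B y x) ∧ DenseRange q ∧
      ∃ P' : E →L[ℂ] E, ‖P'‖ ≤ 1 ∧ IsSelfAdjoint P' ∧ P' * P' = P' ∧
        ∀ x, P' (q x) = q (P x) := by

  classical
  -- auxiliary sesquilinear facts
  have hconj : ∀ x y, (starRingEnd ℂ) (B x y) = B y x := fun x y => by
    rw [hherm x y, RingHomCompTriple.comp_apply]
    simp [hherm y x]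
  letI c : PreInnerProductSpace.Core ℂ V :=
  { inner := fun x y => B y x
    conj_inner_symm := fun x y => hconj x y
    re_inner_nonneg := fun x => hpos x
    add_left := fun x y z => by
      show B z (x + y) = B z x + B z y
      rw [hherm z (x+y), haddl, map_add, hconj, hconj]
    smul_left := fun x y r => by
      show B y (r • x) = (starRingEnd ℂ) r * B y x
      rw [hherm y (r • x), hsmull, map_mul, hconj] }
  letI : SeminormedAddCommGroup V :=
    InnerProductSpace.Core.toSeminormedAddCommGroup (𝕜 := ℂ) (F := V)
  letI : NormedSpace ℂ V := InnerProductSpace.Core.toNormedSpace (𝕜 := ℂ) (F := V)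
  letI inst : InnerProductSpace ℂ V :=
  { toNormedSpace := inferInstance
    inner := fun x y => B y x
    norm_sq_eq_re_inner := fun x => Real.sq_sqrt (hpos x)
    conj_inner_symm := fun x y => hconj x y
    add_left := c.add_left
    smul_left := c.smul_left }
  have hBi : ∀ x y, B x y = ⟪y, x⟫_ℂ := fun _ _ => rfl
  have hP' : ∀ φ, ⟪P φ - φ, P φ⟫_ℂ = 0 := by
    intro φ
    rw [inner_sub_left]
    have h := hP φ
    rw [hBi (P φ) (P φ), hBi (P φ) φ] at h
    rw [h, sub_self]
  have hpol : ∀ x y, ⟪P x - x, P y⟫_ℂ = 0 := by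
    have key : ∀ (t : ℂ) x y,
        t * ⟪P x - x, P y⟫_ℂ + (starRingEnd ℂ t) * ⟪P y - y, P x⟫_ℂ = 0 := by
      intro t x y
      have h := hP' (x + t • y)
      rw [map_add, map_smul] at h
      have hexp : P x + t • P y - (x + t • y) = (P x - x) + t • (P y - y) := by
        rw [smul_sub]; abel
      rw [hexp] at h
      simp only [inner_add_left, inner_add_right, inner_smul_left, inner_smul_right] at h
      rw [hP' x, hP' y] at h
      linear_combination h
    intro x y
    have h1 := key 1 x y
    have hI := key Complex.I x y
    simp only [map_one, one_mul, Complex.conj_I] at h1 hI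
    have h2 : ⟪P x - x, P y⟫_ℂ - ⟪P y - y, P x⟫_ℂ = 0 := by
      linear_combination (-Complex.I) * hI +
        (⟪P x - x, P y⟫_ℂ - ⟪P y - y, P x⟫_ℂ) * Complex.I_sq
    linear_combination (h1 + h2) / 2
  have hIdent : ∀ x y, ⟪P y, P x⟫_ℂ = ⟪y, P x⟫_ℂ := by
    intro x y
    have h := hpol y x
    rw [inner_sub_left, sub_eq_zero] at h
    exact h
  -- norms
  have hre : ∀ x : V, (B x x).re = ‖x‖ ^ 2 := by
    intro x
    have h := @norm_sq_eq_re_inner ℂ V _ _ _ x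
    rw [hBi x x]
    simpa using h.symm
  have hnorm : ∀ φ, ‖P φ‖ ≤ ‖φ‖ := by
    intro φ
    have h0 : ⟪P φ, P φ⟫_ℂ = ⟪φ, P φ⟫_ℂ := by
      have h := hP φ; rwa [hBi (P φ) (P φ), hBi (P φ) φ] at h
    have h1 : ‖P φ‖ ^ 2 = RCLike.re ⟪φ, P φ⟫_ℂ := by
      rw [@norm_sq_eq_re_inner ℂ V _ _ _ (P φ), h0]
    have h2 : RCLike.re ⟪φ, P φ⟫_ℂ ≤ ‖⟪φ, P φ⟫_ℂ‖ := RCLike.re_le_norm _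
    have h3 : ‖⟪φ, P φ⟫_ℂ‖ ≤ ‖φ‖ * ‖P φ‖ := norm_inner_le_norm _ _
    nlinarith [norm_nonneg (P φ), norm_nonneg φ, sq_nonneg (‖P φ‖ - ‖φ‖)]
  have p2 : ∀ φ, (B (P φ) (P φ)).re ≤ (B φ φ).re := by
    intro φ
    rw [hre, hre]
    exact pow_le_pow_left₀ (norm_nonneg _) (hnorm φ) 2
  have him : ∀ x, (B x x).im = 0 := by
    intro x
    have h := hherm x x
    have := congrArg Complex.im h
    simp only [Complex.conj_im] at this
    linarith
  have p1 : ∀ φ, B φ φ = 0 → B (P φ) (P φ) = 0 := by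
    intro φ h
    have h1 : ‖φ‖ ^ 2 = 0 := by rw [← hre, h]; simp
    have h2 : ‖P φ‖ = 0 := le_antisymm (by
      have := hnorm φ
      nlinarith [norm_nonneg φ]) (norm_nonneg _)
    have h3 : (B (P φ) (P φ)).re = 0 := by rw [hre, h2]; ring
    exact Complex.ext h3 (him _)
  have p3 : ∀ φ ψ, B (P φ) ψ = B φ (P ψ) := by
    intro φ ψ
    rw [hBi, hBi]
    calc ⟪ψ, P φ⟫_ℂ = ⟪P ψ, P φ⟫_ℂ := (hIdent φ ψ).symm
      _ = (starRingEnd ℂ) ⟪P φ, P ψ⟫_ℂ := (inner_conj_symm _ _).symm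
      _ = (starRingEnd ℂ) ⟪φ, P ψ⟫_ℂ := by rw [hIdent ψ φ]
      _ = ⟪P ψ, φ⟫_ℂ := inner_conj_symm _ _
  have p4 : ∀ φ, B (P (P φ) - P φ) (P (P φ) - P φ) = 0 := by
    intro φ
    rw [hBi]
    simp only [inner_sub_left, inner_sub_right]
    linear_combination (hIdent (P φ) (P φ)) - (hIdent φ (P φ))
  refine ⟨p1, p2, p3, p4, ?_⟩
  have hsymm : ∀ a b : V, ⟪P a, b⟫_ℂ = ⟪a, P b⟫_ℂ := by
    intro a b
    rw [← hBi b (P a), ← hBi (P b) a]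
    exact (p3 b a).symm
  have hid : ∀ x : V, ‖P (P x) - P x‖ = 0 := by
    intro x
    have h := hre (P (P x) - P x)
    rw [p4 x] at h
    have h2 : ‖P (P x) - P x‖ ^ 2 = 0 := by simpa using h.symm
    exact pow_eq_zero_iff two_ne_zero |>.mp h2
  obtain ⟨E, i1, i2, i3, q, hq, hdq, P', h1, h2, h3, h4⟩ :=
    semidef_aux P hnorm hsymm hid
  exact ⟨E, i1, i2, i3, q, fun x y => (hq x y).trans (hBi y x).symm, hdq,
    P', h1, h2, h3, h4⟩
end

section
/- Suppose the isometry W : H → H^σ intertwines an irreducible representation U with the induced representation L^σ, and W is of the form (Wv)(g) = Δ(g)^{-1/2} B U_g* C v for v ∈ dom C, where B : H → V is Hilbert–Schmidt with ‖B‖_HS = 1 and C is the Duflo–Moore operator. Then B intertwines U restricted to H-the-subgroup with σ, i.e., B U_h = σ_h B for all h in the compact subgroup H ⊂ G. -/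
open scoped InnerProductSpace ComplexConjugate
open MeasureTheory ContinuousLinearMap

noncomputable section


lemma aux_norm_map {E : Type*} [NormedAddCommGroup E] [InnerProductSpace ℂ E] [CompleteSpace E]
    (A : E →L[ℂ] E) (hA : ContinuousLinearMap.adjoint A * A = 1) (x : E) : ‖A x‖ = ‖x‖ := by
  have h0 : ContinuousLinearMap.adjoint A (A x) = x := by
    have := congrArg (fun T : E →L[ℂ] E => T x) hA
    simpa using this
  have h1 : (⟪A x, A x⟫_ℂ) = ⟪x, x⟫_ℂ := by
    rw [← ContinuousLinearMap.adjoint_inner_left, h0]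
  have h3 : ‖A x‖ ^ 2 = ‖x‖ ^ 2 := by
    rw [← @inner_self_eq_norm_sq ℂ, ← @inner_self_eq_norm_sq ℂ, h1]
  nlinarith [norm_nonneg (A x), norm_nonneg x]

lemma aux_cont {K : Type*} [TopologicalSpace K] {V : Type*} [NormedAddCommGroup V]
    [NormedSpace ℂ V]
    (σ : K → (V →L[ℂ] V)) (hiso : ∀ h x, ‖σ h x‖ = ‖x‖)
    (hσcont : ∀ a : V, Continuous fun h => σ h a)
    (ψ : K → V) (hψ : Continuous ψ) : Continuous fun h => σ h (ψ h) := by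
  rw [continuous_iff_continuousAt]
  intro h0
  have h1 : Filter.Tendsto (fun h => σ h (ψ h) - σ h (ψ h0)) (nhds h0) (nhds 0) := by
    apply squeeze_zero_norm (a := fun h => ‖ψ h - ψ h0‖)
    · intro h
      rw [← map_sub]
      exact (hiso _ _).le
    · exact (tendsto_iff_norm_sub_tendsto_zero).1 (hψ.continuousAt (x := h0))
  have h2 : Filter.Tendsto (fun h => σ h (ψ h0)) (nhds h0) (nhds (σ h0 (ψ h0))) :=
    (hσcont (ψ h0)).continuousAt
  have h4 := h1.add h2
  rw [zero_add] at h4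
  have h3 : (fun h => (σ h (ψ h) - σ h (ψ h0)) + σ h (ψ h0)) = fun h => σ h (ψ h) := by
    funext h; abel
  rw [h3] at h4
  exact h4

lemma aux_modular_one
    {V : Type*} [NormedAddCommGroup V] [InnerProductSpace ℂ V] [CompleteSpace V]
    [SecondCountableTopology V]
    {G : Type*} [Group G] [TopologicalSpace G] [IsTopologicalGroup G]
    [LocallyCompactSpace G] [SecondCountableTopology G]
    [MeasurableSpace G] [BorelSpace G]
    (μ : Measure G) [μ.IsHaarMeasure]
    (Δ : G → ℝ) (hΔpos : ∀ g, 0 < Δ g) (hΔmul : ∀ g g', Δ (g * g') = Δ g * Δ g')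
    (hΔcont : Continuous Δ)
    (K : Subgroup G) (hK : IsCompact (K : Set G)) : ∀ h : K, Δ (h : G) = 1 := by
  have hΔ1G : Δ 1 = 1 := by
    have := hΔmul 1 1
    rw [mul_one] at this
    nlinarith [hΔpos 1]
  have hΔpow : ∀ (x : G), ∀ n : ℕ, Δ (x ^ n) = Δ x ^ n := by
    intro x n
    induction n with
    | zero => simpa using hΔ1G
    | succ n ih => rw [pow_succ, pow_succ, hΔmul, ih]
  obtain ⟨M, hM⟩ := (hK.image hΔcont).bddAbove
  have hle1 : ∀ h : K, Δ (h : G) ≤ 1 := by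
    intro h
    by_contra hc
    push_neg at hc
    obtain ⟨n, hn⟩ := pow_unbounded_of_one_lt M hc
    have hmem : ((h : G)) ^ n ∈ (K : Set G) := by
      have := (h ^ n).2
      simpa using this
    have hb : Δ ((h : G) ^ n) ≤ M := hM ⟨(h : G) ^ n, hmem, rfl⟩
    rw [hΔpow] at hb
    exact absurd hb (not_le.2 hn)
  intro h
  have h1 := hle1 h
  have h2 := hle1 h⁻¹
  have h3 : Δ ((h : G)) * Δ ((h⁻¹ : K) : G) = 1 := by
    rw [← hΔmul]
    simp [hΔ1G]
  nlinarith [hΔpos ((h : G)), hΔpos (((h⁻¹ : K) : G))]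

/-- If the isometry `W : H → H^σ ⊆ L²(G;V)` intertwines `U` with the induced
representation `L^σ` and has the form `(Wv)(g) = Δ(g)^{-1/2} B U_g* C v` on `dom C`, with
`‖B‖_HS = 1`, then `B` intertwines `U|_K` with `σ`: `B U_h = σ_h B` for all `h ∈ K`. -/
theorem intertwiner_B_covariant
    {H : Type*} [NormedAddCommGroup H] [InnerProductSpace ℂ H] [CompleteSpace H]
    [SecondCountableTopology H]
    {ιH : Type*} (bH : HilbertBasis ιH ℂ H)
    {V : Type*} [NormedAddCommGroup V] [InnerProductSpace ℂ V] [CompleteSpace V]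
    [SecondCountableTopology V]
    {G : Type*} [Group G] [TopologicalSpace G] [IsTopologicalGroup G]
    [LocallyCompactSpace G] [SecondCountableTopology G]
    [MeasurableSpace G] [BorelSpace G]
    (μ : Measure G) [μ.IsHaarMeasure]
    -- the modular function Δ
    (Δ : G → ℝ) (hΔpos : ∀ g, 0 < Δ g) (hΔmul : ∀ g g', Δ (g * g') = Δ g * Δ g')
    (hΔcont : Continuous Δ)
    (hΔmod : ∀ (g : G) (E : Set G), MeasurableSet E →
      μ ((· * g) '' E) = ENNReal.ofReal (Δ g) * μ E)
    -- the compact subgroup K with normalized Haar measure ν, and σ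
    (K : Subgroup G) (hK : IsCompact (K : Set G))
    (ν : Measure K) [ν.IsHaarMeasure] [IsProbabilityMeasure ν]
    (σ : K → (V →L[ℂ] V))
    (hσmul : ∀ h h', σ (h * h') = σ h * σ h') (hσone : σ 1 = 1)
    (hσunit : ∀ h, adjoint (σ h) * σ h = 1 ∧ σ h * adjoint (σ h) = 1)
    (hσcont : ∀ a : V, Continuous fun h => σ h a)
    -- the irreducible square integrable representation U with Duflo–Moore operator C
    (U : G → (H →L[ℂ] H))
    (hUmul : ∀ g g', U (g * g') = U g * U g') (hUone : U 1 = 1)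
    (hUunit : ∀ g, adjoint (U g) * U g = 1 ∧ U g * adjoint (U g) = 1)
    (hUcont : ∀ v : H, Continuous fun g => U g v)
    (hirr : ∀ S : Submodule ℂ H, IsClosed (S : Set H) →
      (∀ g, ∀ v ∈ S, U g v ∈ S) → S = ⊥ ∨ S = ⊤)
    (domC : Submodule ℂ H) (hdom : Dense (domC : Set H))
    (C : H →ₗ[ℂ] H)
    (hCinj : ∀ v ∈ domC, C v = 0 → v = 0)
    (hCdomInv : ∀ (g : G), ∀ v ∈ domC, U g v ∈ domC)
    (hCcomm : ∀ (g : G), ∀ v ∈ domC,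
      U g (C v) = ((Δ g ^ (-(1/2 : ℝ)) : ℝ)) • C (U g v))
    (hCorth : ∀ (u : H), ∀ v ∈ domC,
      ∫ g, (Δ g)⁻¹ * ‖⟪C v, U g u⟫_ℂ‖ ^ 2 ∂μ = ‖v‖ ^ 2 * ‖u‖ ^ 2)
    -- the representation L ⊗ I and the projection Π onto H^σ
    (L : G → (Lp V 2 μ →L[ℂ] Lp V 2 μ))
    (hL : ∀ (g : G) (f : Lp V 2 μ), ∀ᵐ x ∂μ, (L g f : G → V) x = (f : G → V) (g⁻¹ * x))
    (Pi : Lp V 2 μ →L[ℂ] Lp V 2 μ)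
    (hPi : ∀ f : Lp V 2 μ, ∀ᵐ g ∂μ,
      (Pi f : G → V) g = ∫ h : K, σ h ((f : G → V) (g * (h : G))) ∂ν)
    -- the intertwining isometry W with range in H^σ, of the stated form
    (W : H →ₗᵢ[ℂ] Lp V 2 μ)
    (hWrange : ∀ v : H, Pi (W v) = W v)
    (hWint : ∀ (g : G) (v : H), W (U g v) = L g (W v))
    (B : H →L[ℂ] V)
    (hBnorm : (Summable fun i => ‖B (bH i)‖ ^ 2) ∧ (∑' i, ‖B (bH i)‖ ^ 2) = 1)
    (hWform : ∀ v ∈ domC, ∀ᵐ g ∂μ,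
      (W v : G → V) g = ((Δ g ^ (-(1/2 : ℝ)) : ℝ)) • B (adjoint (U g) (C v))) :
    ∀ h : K, B.comp (U (h : G)) = (σ h).comp B := by
    -- instances
  haveI : SecondCountableTopology K := (inferInstance : SecondCountableTopology (K : Set G))
  haveI : OpensMeasurableSpace K := (inferInstance : OpensMeasurableSpace (K : Set G))
  haveI : CompactSpace K := isCompact_iff_compactSpace.mp hK
  haveI : MeasurableMul K := by
    constructor
    · intro c
      exact Measurable.subtype_mk (continuous_const.mul continuous_subtype_val).measurable
    · intro c
      exact Measurable.subtype_mk (continuous_subtype_val.mul continuous_const).measurable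
  -- basic facts
  have hΔ1 : ∀ h : K, Δ (h : G) = 1 := aux_modular_one (V := V) μ Δ hΔpos hΔmul hΔcont K hK
  have hUadj : ∀ g : G, adjoint (U g) = U g⁻¹ := by
    intro g
    have hUinvmul : U g * U g⁻¹ = 1 := by rw [← hUmul, mul_inv_cancel, hUone]
    calc adjoint (U g) = adjoint (U g) * (U g * U g⁻¹) := by rw [hUinvmul, mul_one]
    _ = (adjoint (U g) * U g) * U g⁻¹ := by rw [mul_assoc]
    _ = U g⁻¹ := by rw [(hUunit g).1, one_mul]
  have hUnorm : ∀ (g : G) (x : H), ‖U g x‖ = ‖x‖ := fun g x => aux_norm_map _ (hUunit g).1 x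
  have hσnorm : ∀ (h : K) (x : V), ‖σ h x‖ = ‖x‖ := fun h x => aux_norm_map _ (hσunit h).1 x
  -- the averaged operator T
  have contInt : ∀ w : H, Continuous fun h : K => σ h (B (U ((h : G))⁻¹ w)) := by
    intro w
    exact aux_cont σ hσnorm hσcont _
      (B.continuous.comp ((hUcont w).comp (continuous_subtype_val.inv)))
  have intInt : ∀ w : H, Integrable (fun h : K => σ h (B (U ((h : G))⁻¹ w))) ν := fun w =>
    (contInt w).integrable_of_hasCompactSupport (HasCompactSupport.of_compactSpace _)
  have hTbound : ∀ w : H, ‖∫ h : K, σ h (B (U ((h : G))⁻¹ w)) ∂ν‖ ≤ ‖B‖ * ‖w‖ := by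
    intro w
    have hb : ∀ᵐ h ∂ν, ‖σ h (B (U ((h : G))⁻¹ w))‖ ≤ ‖B‖ * ‖w‖ := by
      refine Filter.Eventually.of_forall fun h => ?_
      rw [hσnorm]
      calc ‖B (U ((h : G))⁻¹ w)‖ ≤ ‖B‖ * ‖U ((h : G))⁻¹ w‖ := B.le_opNorm _
      _ = ‖B‖ * ‖w‖ := by rw [hUnorm]
    have := norm_integral_le_of_norm_le_const hb
    simpa using this
  set T : H →L[ℂ] V := LinearMap.mkContinuous
    { toFun := fun w => ∫ h : K, σ h (B (U ((h : G))⁻¹ w)) ∂ν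
      map_add' := by
        intro x y
        simp only [map_add]
        exact integral_add (intInt x) (intInt y)
      map_smul' := by
        intro c x
        simp only [ContinuousLinearMap.map_smul, RingHom.id_apply]
        exact integral_smul c _ } ‖B‖ hTbound with hTdef
  have hT : ∀ w : H, T w = ∫ h : K, σ h (B (U ((h : G))⁻¹ w)) ∂ν := fun w => rfl
  -- the key a.e./continuity step
  have vanish : ∀ v ∈ domC, ∀ g : G,
      B (U g⁻¹ (C v)) = ∫ h : K, σ h (B (U (g * (h : G))⁻¹ (C v))) ∂ν := by
    intro v hv
    set φ : G → V := fun g => ((Δ g ^ (-(1/2 : ℝ)) : ℝ)) • B (U g⁻¹ (C v)) with hφ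
    have hae1 : ∀ᵐ g ∂μ, (W v : G → V) g = φ g := by
      filter_upwards [hWform v hv] with g hg
      rw [hg, hUadj, hφ]
    set N : Set G := toMeasurable μ {g | ¬ (W v : G → V) g = φ g} with hN
    have hNmeas : MeasurableSet N := measurableSet_toMeasurable _ _
    have hNnull : μ N = 0 := by
      rw [hN, measure_toMeasurable]
      exact ae_iff.mp hae1
    have hsub : {g | ¬ (W v : G → V) g = φ g} ⊆ N := subset_toMeasurable _ _
    have hslice : ∀ h : K, μ {g : G | g * (h : G) ∈ N} = 0 := by
      intro h
      have himg : {g : G | g * (h : G) ∈ N} = (· * ((h : G))⁻¹) '' N := by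
        ext g
        constructor
        · intro hg
          exact ⟨g * (h : G), hg, by simp⟩
        · rintro ⟨n, hn, rfl⟩
          simpa using hn
      rw [himg, hΔmod _ _ hNmeas, hNnull, mul_zero]
    have hprodmeas : MeasurableSet {p : G × K | p.1 * ((p.2 : K) : G) ∈ N} := by
      have hc : Continuous fun p : G × K => p.1 * ((p.2 : K) : G) :=
        continuous_fst.mul (continuous_subtype_val.comp continuous_snd)
      exact hc.measurable hNmeas
    have hprod : (μ.prod ν) {p : G × K | p.1 * ((p.2 : K) : G) ∈ N} = 0 := by
      rw [Measure.prod_apply_symm hprodmeas]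
      have hl : ∫⁻ (y : K), μ ((fun x => (x, y)) ⁻¹' {p : G × K | p.1 * ((p.2 : K) : G) ∈ N}) ∂ν
          = ∫⁻ (_ : K), 0 ∂ν := lintegral_congr fun h => hslice h
      rw [hl, lintegral_zero]
    have hae2 : ∀ᵐ g ∂μ, ∀ᵐ h : K ∂ν, (W v : G → V) (g * (h : G)) = φ (g * (h : G)) := by
      have hp : ∀ᵐ p : G × K ∂(μ.prod ν), p.1 * ((p.2 : K) : G) ∉ N := by
        rw [ae_iff]
        simpa [not_not] using hprod
      have h2 := Measure.ae_ae_of_ae_prod hp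
      filter_upwards [h2] with g hg
      filter_upwards [hg] with h hh
      by_contra hcon
      exact hh (hsub hcon)
    have hae3 : ∀ᵐ g ∂μ, (W v : G → V) g = ∫ h : K, σ h ((W v : G → V) (g * (h : G))) ∂ν := by
      have := hPi (W v)
      rw [hWrange v] at this
      exact this
    have hae4 : (fun g : G => B (U g⁻¹ (C v)))
        =ᵐ[μ] (fun g : G => ∫ h : K, σ h (B (U (g * (h : G))⁻¹ (C v))) ∂ν) := by
      filter_upwards [hae1, hae2, hae3] with g h1 h2 h3
      have hne : (Δ g ^ (-(1/2 : ℝ)) : ℝ) ≠ 0 := ne_of_gt (Real.rpow_pos_of_pos (hΔpos g) _)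
      have e1 : ∫ h : K, σ h ((W v : G → V) (g * (h : G))) ∂ν
          = ((Δ g ^ (-(1/2 : ℝ)) : ℝ)) • ∫ h : K, σ h (B (U (g * (h : G))⁻¹ (C v))) ∂ν := by
        rw [← integral_smul]
        apply integral_congr_ae
        filter_upwards [h2] with h hh
        rw [hh, hφ]
        simp only
        rw [hΔmul, hΔ1, mul_one, ContinuousLinearMap.map_smul_of_tower]
      have e2 : ((Δ g ^ (-(1/2 : ℝ)) : ℝ)) • B (U g⁻¹ (C v))
          = ((Δ g ^ (-(1/2 : ℝ)) : ℝ)) • ∫ h : K, σ h (B (U (g * (h : G))⁻¹ (C v))) ∂ν := by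
        rw [← e1, ← h3, h1, hφ]
      have h6 : ((Δ g ^ (-(1/2 : ℝ)) : ℝ))⁻¹ • (((Δ g ^ (-(1/2 : ℝ)) : ℝ)) • B (U g⁻¹ (C v)))
          = ((Δ g ^ (-(1/2 : ℝ)) : ℝ))⁻¹
            • (((Δ g ^ (-(1/2 : ℝ)) : ℝ)) • ∫ h : K, σ h (B (U (g * (h : G))⁻¹ (C v))) ∂ν) := by
        rw [e2]
      rw [inv_smul_smul₀ hne, inv_smul_smul₀ hne] at h6
      exact h6
    have c1 : Continuous fun g : G => B (U g⁻¹ (C v)) :=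
      B.continuous.comp ((hUcont (C v)).comp continuous_inv)
    have c2 : Continuous fun g : G => ∫ h : K, σ h (B (U (g * (h : G))⁻¹ (C v))) ∂ν := by
      apply continuous_of_dominated (bound := fun _ : K => ‖B‖ * ‖C v‖)
      · intro g
        apply Continuous.aestronglyMeasurable
        exact aux_cont σ hσnorm hσcont _
          (B.continuous.comp ((hUcont (C v)).comp
            ((continuous_const.mul continuous_subtype_val).inv)))
      · intro g
        refine Filter.Eventually.of_forall fun h => ?_
        rw [hσnorm]
        calc ‖B (U (g * (h : G))⁻¹ (C v))‖ ≤ ‖B‖ * ‖U (g * (h : G))⁻¹ (C v)‖ := B.le_opNorm _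
        _ = ‖B‖ * ‖C v‖ := by rw [hUnorm]
      · exact integrable_const _
      · refine Filter.Eventually.of_forall fun h : K => ?_
        exact (σ h).continuous.comp (B.continuous.comp ((hUcont (C v)).comp
          ((continuous_id.mul continuous_const).inv)))
    have := (Continuous.ae_eq_iff_eq μ c1 c2).1 hae4
    intro g
    exact congrFun this g
  -- B = T via irreducibility
  have hBT : ∀ w : H, B w = T w := by
    by_cases htriv : ∀ x : H, x = 0
    · intro w
      rw [htriv w, map_zero, map_zero]
    · set Sgen : Set H := {x | ∃ g : G, ∃ v ∈ domC, U g (C v) = x} with hSgen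
      set S : Submodule ℂ H := (Submodule.span ℂ Sgen).topologicalClosure with hS
      have hSinv : ∀ g, ∀ x ∈ S, U g x ∈ S := by
        intro g x hx
        have hgen : ∀ y ∈ Submodule.span ℂ Sgen, U g y ∈ Submodule.span ℂ Sgen := by
          have hle : Submodule.map (U g : H →ₗ[ℂ] H) (Submodule.span ℂ Sgen)
              ≤ Submodule.span ℂ Sgen := by
            rw [Submodule.map_span]
            apply Submodule.span_le.2
            rintro _ ⟨x', ⟨g', v, hv, rfl⟩, rfl⟩
            refine Submodule.subset_span ⟨g * g', v, hv, ?_⟩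
            rw [hUmul]
            rfl
          exact fun y hy => hle ⟨y, hy, rfl⟩
        have h1 : (U g) '' ((Submodule.span ℂ Sgen : Submodule ℂ H) : Set H) ⊆ (S : Set H) := by
          rintro _ ⟨z, hz, rfl⟩
          exact Submodule.le_topologicalClosure _ (hgen z hz)
        have h2 : U g x ∈ closure ((U g) '' ((Submodule.span ℂ Sgen : Submodule ℂ H) : Set H)) := by
          apply image_closure_subset_closure_image (U g).continuous
          exact ⟨x, hx, rfl⟩
        have h3 : U g x ∈ closure (S : Set H) := closure_mono h1 h2
        rwa [IsClosed.closure_eq (Submodule.isClosed_topologicalClosure _)] at h3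
      rcases hirr S (Submodule.isClosed_topologicalClosure _) hSinv with hbot | htop
      · exfalso
        apply htriv
        intro x
        have hd : (domC : Set H) ⊆ ({0} : Set H) := by
          intro y hy
          have h1 : U 1 (C y) ∈ S :=
            Submodule.le_topologicalClosure _ (Submodule.subset_span ⟨1, y, hy, rfl⟩)
          rw [hbot, Submodule.mem_bot] at h1
          have h2 : C y = 0 := by simpa [hUone] using h1
          exact Set.mem_singleton_iff.2 (hCinj y hy h2)
        have h3 : closure (domC : Set H) ⊆ ({0} : Set H) :=
          closure_minimal hd isClosed_singleton
        have h4 : x ∈ closure (domC : Set H) := by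
          rw [hdom.closure_eq]
          trivial
        simpa using h3 h4
      · intro w
        have hker : S ≤ LinearMap.ker ((B - T : H →L[ℂ] V) : H →ₗ[ℂ] V) := by
          apply Submodule.topologicalClosure_minimal
          · apply Submodule.span_le.2
            rintro _ ⟨g, v, hv, rfl⟩
            rw [SetLike.mem_coe, LinearMap.mem_ker]
            show (B - T) (U g (C v)) = 0
            rw [ContinuousLinearMap.sub_apply, sub_eq_zero, hT]
            have hv2 := vanish v hv g⁻¹
            rw [inv_inv] at hv2
            rw [hv2]
            apply integral_congr_ae
            refine Filter.Eventually.of_forall fun h : K => ?_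
            have e : U ((h : G))⁻¹ (U g (C v)) = U (g⁻¹ * (h : G))⁻¹ (C v) := by
              rw [mul_inv_rev, inv_inv, hUmul]
              rfl
            show σ h (B (U (g⁻¹ * (h : G))⁻¹ (C v))) = σ h (B (U ((h : G))⁻¹ (U g (C v))))
            rw [← e]
          · exact ContinuousLinearMap.isClosed_ker _
        have hw : w ∈ S := by rw [htop]; trivial
        have := hker hw
        rw [LinearMap.mem_ker] at this
        have h5 : (B - T) w = 0 := this
        rw [ContinuousLinearMap.sub_apply, sub_eq_zero] at h5
        exact h5
  -- conclude covariance via left invariance of ν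
  intro h0
  ext w
  simp only [ContinuousLinearMap.comp_apply]
  rw [hBT (U (h0 : G) w), hT]
  have e1 : (fun h : K => σ h (B (U ((h : G))⁻¹ (U (h0 : G) w))))
      = fun h : K => σ h (B (U (((h : G))⁻¹ * (h0 : G)) w)) := by
    funext h
    rw [hUmul]
    rfl
  rw [e1]
  have e3 := integral_mul_left_eq_self
    (μ := ν) (fun h : K => σ h (B (U (((h : G))⁻¹ * (h0 : G)) w))) h0
  rw [← e3]
  have e4 : (fun h : K => σ (h0 * h) (B (U ((((h0 * h : K) : G))⁻¹ * (h0 : G)) w)))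
      = fun h : K => σ h0 (σ h (B (U ((h : G))⁻¹ w))) := by
    funext h
    have hc : (((h0 * h : K) : G))⁻¹ * (h0 : G) = ((h : G))⁻¹ := by
      push_cast
      group
    rw [hc, hσmul]
    rfl
  calc ∫ h : K, σ (h0 * h) (B (U ((((h0 * h : K) : G))⁻¹ * (h0 : G)) w)) ∂ν
      = ∫ h : K, σ h0 (σ h (B (U ((h : G))⁻¹ w))) ∂ν := by rw [e4]
  _ = σ h0 (∫ h : K, σ h (B (U ((h : G))⁻¹ w)) ∂ν) :=
      ContinuousLinearMap.integral_comp_comm (σ h0) (intInt w)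
  _ = σ h0 (B w) := by rw [← hT, hBT w]
end
end

section
/- Conversely: if U is a square integrable irreducible unitary representation of G on H with Duflo–Moore operator C, and B : H → V is Hilbert–Schmidt with ‖B‖_HS = 1 and B U_h = σ_h B for all h in the compact subgroup H, then the map W defined on dom C by (Wv)(g) = Δ(g)^{-1/2} B U_g* C v extends to an isometry from H into H^σ intertwining U with L^σ. -/
open scoped InnerProductSpace ComplexConjugate
open MeasureTheory ContinuousLinearMap

noncomputable section

theorem orthonormal_set_countable' {V : Type*} [NormedAddCommGroup V] [InnerProductSpace ℂ V]
    [SecondCountableTopology V] {w : Set V}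
    (hw : Orthonormal ℂ ((↑) : w → V)) : w.Countable := by
  have hd : w.PairwiseDisjoint (fun x => Metric.ball x (1/2)) := by
    intro x hx y hy hxy
    have hxy' : (⟨x, hx⟩ : w) ≠ ⟨y, hy⟩ := by simpa [Subtype.ext_iff] using hxy
    have h0 : ⟪x, y⟫_ℂ = 0 := by
      have := hw.2 hxy'; simpa using this
    have hnx : ‖x‖ = 1 := by simpa using hw.1 ⟨x, hx⟩
    have hny : ‖y‖ = 1 := by simpa using hw.1 ⟨y, hy⟩
    have hsq : ‖x - y‖ ^ 2 = 2 := by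
      rw [@norm_sub_sq ℂ, h0, hnx, hny]; norm_num
    have hdist : (1:ℝ) ≤ dist x y := by
      rw [dist_eq_norm]
      nlinarith [norm_nonneg (x - y)]
    intro s hs1 hs2 a ha
    have h1 := hs1 ha; have h2 := hs2 ha
    simp only [Metric.mem_ball] at h1 h2
    have := dist_triangle x a y
    rw [dist_comm x a] at this
    linarith [hdist]
  exact hd.countable_of_isOpen (fun x _ => Metric.isOpen_ball)
    (fun x _ => ⟨x, by simp⟩)

theorem hb_hasSum_sq' {E : Type*} [NormedAddCommGroup E] [InnerProductSpace ℂ E] [CompleteSpace E]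
    {ι : Type*} (b : HilbertBasis ι ℂ E) (x : E) :
    HasSum (fun i => ‖⟪b i, x⟫_ℂ‖ ^ 2) (‖x‖ ^ 2) := by
  have h := b.hasSum_inner_mul_inner x x
  have h2 : ∀ i, ⟪x, b i⟫_ℂ * ⟪b i, x⟫_ℂ = ((‖⟪b i, x⟫_ℂ‖ ^ 2 : ℝ) : ℂ) := by
    intro i
    have : ⟪x, b i⟫_ℂ = (starRingEnd ℂ) ⟪b i, x⟫_ℂ := (inner_conj_symm _ _).symm
    rw [this, ← Complex.normSq_eq_conj_mul_self]
    rw [Complex.normSq_eq_norm_sq]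
  have h3 : ⟪x, x⟫_ℂ = ((‖x‖ ^ 2 : ℝ) : ℂ) := by
    rw [inner_self_eq_norm_sq_to_K]; norm_cast
  rw [h3] at h
  simp only [h2] at h
  exact Complex.hasSum_ofReal.1 h

theorem hb_esum_sq' {E : Type*} [NormedAddCommGroup E] [InnerProductSpace ℂ E] [CompleteSpace E]
    {ι : Type*} (b : HilbertBasis ι ℂ E) (x : E) :
    ∑' i, ENNReal.ofReal (‖⟪b i, x⟫_ℂ‖ ^ 2) = ENNReal.ofReal (‖x‖ ^ 2) := by
  have h := hb_hasSum_sq' b x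
  rw [← h.tsum_eq, ← ENNReal.ofReal_tsum_of_nonneg (fun i => by positivity) h.summable]

theorem hs_symm' {H V : Type*} [NormedAddCommGroup H] [InnerProductSpace ℂ H] [CompleteSpace H]
    [NormedAddCommGroup V] [InnerProductSpace ℂ V] [CompleteSpace V]
    {ι κ : Type*}
    (bH : HilbertBasis ι ℂ H) (bV : HilbertBasis κ ℂ V) (B : H →L[ℂ] V) :
    ∑' j, ENNReal.ofReal (‖(adjoint B) (bV j)‖ ^ 2)
      = ∑' i, ENNReal.ofReal (‖B (bH i)‖ ^ 2) := by
  have key : ∀ (i : ι) (j : κ), ‖⟪bH i, (adjoint B) (bV j)⟫_ℂ‖ = ‖⟪bV j, B (bH i)⟫_ℂ‖ := by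
    intro i j
    rw [norm_inner_symm, adjoint_inner_left]
  calc ∑' j, ENNReal.ofReal (‖(adjoint B) (bV j)‖ ^ 2)
      = ∑' j, ∑' i, ENNReal.ofReal (‖⟪bH i, (adjoint B) (bV j)⟫_ℂ‖ ^ 2) := by
        simp only [hb_esum_sq' bH]
    _ = ∑' i, ∑' j, ENNReal.ofReal (‖⟪bV j, B (bH i)⟫_ℂ‖ ^ 2) := by
        rw [ENNReal.tsum_comm]
        simp only [key]
    _ = ∑' i, ENNReal.ofReal (‖B (bH i)‖ ^ 2) := by
        simp only [hb_esum_sq' bV]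

set_option maxHeartbeats 2000000 in
/-- Conversely, if `U` is square integrable with Duflo–Moore operator `C`
and `B : H → V` is Hilbert–Schmidt with `‖B‖_HS = 1` and `B U_h = σ_h B` for all `h` in the
compact subgroup `K`, then `(Wv)(g) = Δ(g)^{-1/2} B U_g* C v` (for `v ∈ dom C`) extends to an
isometry `W : H → H^σ` intertwining `U` with `L^σ`. -/
theorem intertwiner_from_B
    {H : Type*} [NormedAddCommGroup H] [InnerProductSpace ℂ H] [CompleteSpace H]
    [SecondCountableTopology H]
    {ιH : Type*} (bH : HilbertBasis ιH ℂ H)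
    {V : Type*} [NormedAddCommGroup V] [InnerProductSpace ℂ V] [CompleteSpace V]
    [SecondCountableTopology V]
    {G : Type*} [Group G] [TopologicalSpace G] [IsTopologicalGroup G]
    [LocallyCompactSpace G] [SecondCountableTopology G]
    [MeasurableSpace G] [BorelSpace G]
    (μ : Measure G) [μ.IsHaarMeasure]
    -- the modular function Δ
    (Δ : G → ℝ) (hΔpos : ∀ g, 0 < Δ g) (hΔmul : ∀ g g', Δ (g * g') = Δ g * Δ g')
    (hΔcont : Continuous Δ)
    (hΔmod : ∀ (g : G) (E : Set G), MeasurableSet E →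
      μ ((· * g) '' E) = ENNReal.ofReal (Δ g) * μ E)
    -- the compact subgroup K with normalized Haar measure ν, and σ
    (K : Subgroup G) (hK : IsCompact (K : Set G))
    (ν : Measure K) [ν.IsHaarMeasure] [IsProbabilityMeasure ν]
    (σ : K → (V →L[ℂ] V))
    (hσmul : ∀ h h', σ (h * h') = σ h * σ h') (hσone : σ 1 = 1)
    (hσunit : ∀ h, adjoint (σ h) * σ h = 1 ∧ σ h * adjoint (σ h) = 1)
    (hσcont : ∀ a : V, Continuous fun h => σ h a)
    -- the irreducible square integrable representation U with Duflo–Moore operator C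
    (U : G → (H →L[ℂ] H))
    (hUmul : ∀ g g', U (g * g') = U g * U g') (hUone : U 1 = 1)
    (hUunit : ∀ g, adjoint (U g) * U g = 1 ∧ U g * adjoint (U g) = 1)
    (hUcont : ∀ v : H, Continuous fun g => U g v)
    (hirr : ∀ S : Submodule ℂ H, IsClosed (S : Set H) →
      (∀ g, ∀ v ∈ S, U g v ∈ S) → S = ⊥ ∨ S = ⊤)
    (hsq : ∃ v : H, v ≠ 0 ∧ MemLp (fun g => ⟪v, U g v⟫_ℂ) 2 μ)
    (domC : Submodule ℂ H) (hdom : Dense (domC : Set H))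
    (C : H →ₗ[ℂ] H)
    (hCinj : ∀ v ∈ domC, C v = 0 → v = 0)
    (hCdomInv : ∀ (g : G), ∀ v ∈ domC, U g v ∈ domC)
    (hCcomm : ∀ (g : G), ∀ v ∈ domC,
      U g (C v) = ((Δ g ^ (-(1/2 : ℝ)) : ℝ)) • C (U g v))
    (hCorth : ∀ (u : H), ∀ v ∈ domC,
      ∫ g, (Δ g)⁻¹ * ‖⟪C v, U g u⟫_ℂ‖ ^ 2 ∂μ = ‖v‖ ^ 2 * ‖u‖ ^ 2)
    -- the representation L ⊗ I and the projection Π onto H^σ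
    (L : G → (Lp V 2 μ →L[ℂ] Lp V 2 μ))
    (hL : ∀ (g : G) (f : Lp V 2 μ), ∀ᵐ x ∂μ, (L g f : G → V) x = (f : G → V) (g⁻¹ * x))
    (Pi : Lp V 2 μ →L[ℂ] Lp V 2 μ)
    (hPi : ∀ f : Lp V 2 μ, ∀ᵐ g ∂μ,
      (Pi f : G → V) g = ∫ h : K, σ h ((f : G → V) (g * (h : G))) ∂ν)
    -- the Hilbert–Schmidt intertwiner B
    (B : H →L[ℂ] V)
    (hBsum : Summable fun i => ‖B (bH i)‖ ^ 2) (hBnorm : (∑' i, ‖B (bH i)‖ ^ 2) = 1)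
    (hBint : ∀ h : K, B.comp (U (h : G)) = (σ h).comp B) :
    ∃ W : H →ₗᵢ[ℂ] Lp V 2 μ,
      (∀ v ∈ domC, ∀ᵐ g ∂μ,
        (W v : G → V) g = ((Δ g ^ (-(1/2 : ℝ)) : ℝ)) • B (adjoint (U g) (C v))) ∧
      (∀ v : H, Pi (W v) = W v) ∧
      (∀ (g : G) (v : H), W (U g v) = L g (W v)) := by
  -- basic facts about Δ
  have hΔ1 : Δ 1 = 1 := by
    have h := hΔmul 1 1
    rw [one_mul] at h
    have := (hΔpos 1).ne'
    nlinarith [hΔpos 1]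
  have hΔinv : ∀ g : G, Δ g⁻¹ = (Δ g)⁻¹ := by
    intro g
    have h : Δ g⁻¹ * Δ g = 1 := by rw [← hΔmul, inv_mul_cancel, hΔ1]
    exact eq_inv_of_mul_eq_one_left h
  have hΔpow : ∀ (g : G) (n : ℕ), Δ (g ^ n) = (Δ g) ^ n := by
    intro g n
    induction n with
    | zero => simpa using hΔ1
    | succ n ih => rw [pow_succ, hΔmul, ih, pow_succ]
  -- Δ is 1 on the compact subgroup K
  have hΔK : ∀ h : K, Δ (h : G) = 1 := by
    have hle : ∀ h : K, Δ (h : G) ≤ 1 := by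
      intro h
      by_contra hc
      push_neg at hc
      obtain ⟨M, hM⟩ := (hK.image hΔcont).bddAbove
      obtain ⟨n, hn⟩ := pow_unbounded_of_one_lt M hc
      have hmem : Δ ((h : G) ^ n) ∈ Δ '' (K : Set G) :=
        ⟨(h : G) ^ n, by exact_mod_cast (pow_mem h.2 n), rfl⟩
      have := hM hmem
      rw [hΔpow] at this
      linarith
    intro h
    have h1 := hle h
    have h2 := hle h⁻¹
    have h3 : ((h⁻¹ : K) : G) = (h : G)⁻¹ := rfl
    rw [h3, hΔinv] at h2
    have hp := hΔpos (h : G)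
    have : 1 ≤ Δ (h : G) := by
      rw [inv_le_one_iff₀] at h2  -- may fail; handle below
      rcases h2 with h2 | h2
      · linarith
      · exact h2
    linarith
  -- unitarity facts about U
  have hUinvmul : ∀ g : G, U g * U g⁻¹ = 1 := by
    intro g; rw [← hUmul, mul_inv_cancel, hUone]
  have hUmulinv : ∀ g : G, U g⁻¹ * U g = 1 := by
    intro g; rw [← hUmul, inv_mul_cancel, hUone]
  have hadj : ∀ g : G, adjoint (U g) = U g⁻¹ := by
    intro g
    calc adjoint (U g) = adjoint (U g) * (U g * U g⁻¹) := by rw [hUinvmul]; simp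
    _ = (adjoint (U g) * U g) * U g⁻¹ := by rw [mul_assoc]
    _ = U g⁻¹ := by rw [(hUunit g).1, one_mul]
  -- a countable Hilbert basis for V
  obtain ⟨w, bV, hbV⟩ := exists_hilbertBasis ℂ V
  have hworth : Orthonormal ℂ ((↑) : w → V) := hbV ▸ bV.orthonormal
  haveI : Countable w := (orthonormal_set_countable' hworth).to_subtype
  -- the Hilbert-Schmidt vectors
  set u : w → H := fun j => adjoint B (bV j) with hu
  have hBstar : ∑' (j : w), ENNReal.ofReal (‖u j‖ ^ 2) = 1 := by
    rw [hu]
    rw [hs_symm' bH bV B]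
    rw [← ENNReal.ofReal_tsum_of_nonneg (fun i => by positivity) hBsum, hBnorm,
      ENNReal.ofReal_one]
  -- the map F
  set F : H → G → V := fun v g => ((Δ g ^ (-(1/2 : ℝ)) : ℝ)) • B ((adjoint (U g)) (C v))
    with hF
  have hrpowc : Continuous fun g => (Δ g ^ (-(1/2 : ℝ)) : ℝ) :=
    hΔcont.rpow_const (fun g => Or.inl (hΔpos g).ne')
  have hFc : ∀ v : H, Continuous (F v) := by
    intro v
    have h1 : (fun g => (adjoint (U g)) (C v)) = fun g => U g⁻¹ (C v) := by
      funext g; rw [hadj]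
    apply Continuous.smul hrpowc
    rw [show (fun g => B ((adjoint (U g)) (C v))) = fun g => B (U g⁻¹ (C v)) by
      funext g; rw [hadj]]
    exact B.continuous.comp ((hUcont (C v)).comp continuous_inv)
  -- auxiliary norm computations
  have henn : ∀ (x : V), ((‖x‖₊ : ENNReal)) ^ (2:ℝ) = ENNReal.ofReal (‖x‖ ^ 2) := by
    intro x
    rw [← enorm_eq_nnnorm, ← ofReal_norm, ENNReal.ofReal_rpow_of_nonneg (norm_nonneg x)
      (by norm_num)]
    congr 1
    rw [← Real.rpow_natCast ‖x‖ 2]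
    norm_num
  have hsc : ∀ g : G, (Δ g ^ (-(1/2 : ℝ)) : ℝ) ^ 2 = (Δ g)⁻¹ := by
    intro g
    rw [← Real.rpow_natCast (Δ g ^ (-(1/2 : ℝ)) : ℝ) 2, ← Real.rpow_mul (hΔpos g).le]
    norm_num [Real.rpow_neg_one]
  -- pointwise expansion of ‖F v g‖²
  have hptwise : ∀ (v : H) (g : G), ((‖F v g‖₊ : ENNReal)) ^ (2:ℝ)
      = ∑' (j : w), ENNReal.ofReal ((Δ g)⁻¹ * ‖⟪C v, U g (u j)⟫_ℂ‖ ^ 2) := by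
    intro v g
    rw [henn]
    have h1 : ‖F v g‖ ^ 2 = (Δ g)⁻¹ * ‖B ((adjoint (U g)) (C v))‖ ^ 2 := by
      rw [hF]
      simp only [norm_smul, Real.norm_eq_abs, mul_pow,
        abs_of_pos (Real.rpow_pos_of_pos (hΔpos g) _), hsc]
    rw [h1, ENNReal.ofReal_mul (inv_nonneg.2 (hΔpos g).le)]
    rw [← hb_esum_sq' bV ((B ((adjoint (U g)) (C v))))]
    rw [← ENNReal.tsum_mul_left]
    congr 1
    funext j
    rw [← ENNReal.ofReal_mul (inv_nonneg.2 (hΔpos g).le)]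
    congr 2
    have h2 : ⟪bV j, B ((adjoint (U g)) (C v))⟫_ℂ = ⟪u j, (adjoint (U g)) (C v)⟫_ℂ := by
      rw [hu]; rw [adjoint_inner_left]
    rw [h2, hadj]
    rw [norm_inner_symm]
    congr 1
    rw [← hadj g, adjoint_inner_left]
  -- the key lintegral computation
  have hkey : ∀ v ∈ domC, ∫⁻ g, ((‖F v g‖₊ : ENNReal)) ^ (2:ℝ) ∂μ
      = ENNReal.ofReal (‖v‖ ^ 2) := by
    intro v hv
    have hTcont : ∀ j : w, Continuous fun g => (Δ g)⁻¹ * ‖⟪C v, U g (u j)⟫_ℂ‖ ^ 2 := by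
      intro j
      apply Continuous.mul (hΔcont.inv₀ (fun g => (hΔpos g).ne'))
      exact (Continuous.norm (Continuous.inner continuous_const (hUcont (u j)))).pow 2
    have hTint : ∀ j : w, Integrable (fun g => (Δ g)⁻¹ * ‖⟪C v, U g (u j)⟫_ℂ‖ ^ 2) μ := by
      intro j
      by_contra hni
      have h0 : ∫ g, (Δ g)⁻¹ * ‖⟪C v, U g (u j)⟫_ℂ‖ ^ 2 ∂μ = 0 := integral_undef hni
      have h1 := hCorth (u j) v hv
      rw [h0] at h1
      have h2 : v = 0 ∨ u j = 0 := by
        rcases mul_eq_zero.1 h1.symm with h | h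
        · left; simpa using (pow_eq_zero_iff (by norm_num)).1 h
        · right; simpa using (pow_eq_zero_iff (by norm_num)).1 h
      apply hni
      rcases h2 with h | h
      · have : C v = 0 := by rw [h]; exact map_zero C
        simpa [this] using integrable_zero G ℝ μ
      · have : ∀ g, ⟪C v, U g (u j)⟫_ℂ = 0 := by
          intro g; rw [h]; simp
        simpa [this] using integrable_zero G ℝ μ
    calc ∫⁻ g, ((‖F v g‖₊ : ENNReal)) ^ (2:ℝ) ∂μ
        = ∫⁻ g, ∑' (j : w), ENNReal.ofReal ((Δ g)⁻¹ * ‖⟪C v, U g (u j)⟫_ℂ‖ ^ 2) ∂μ := by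
          simp only [hptwise]
      _ = ∑' (j : w), ∫⁻ g, ENNReal.ofReal ((Δ g)⁻¹ * ‖⟪C v, U g (u j)⟫_ℂ‖ ^ 2) ∂μ := by
          apply lintegral_tsum
          intro j
          exact (ENNReal.continuous_ofReal.comp (hTcont j)).measurable.aemeasurable
      _ = ∑' (j : w), ENNReal.ofReal (‖v‖ ^ 2 * ‖u j‖ ^ 2) := by
          congr 1; funext j
          rw [← ofReal_integral_eq_lintegral_ofReal (hTint j)
            (Filter.Eventually.of_forall (fun g => mul_nonneg (inv_nonneg.2 (hΔpos g).le) (by positivity)))]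
          rw [hCorth (u j) v hv]
      _ = ENNReal.ofReal (‖v‖ ^ 2) := by
          have : ∀ j : w, ENNReal.ofReal (‖v‖ ^ 2 * ‖u j‖ ^ 2)
              = ENNReal.ofReal (‖v‖ ^ 2) * ENNReal.ofReal (‖u j‖ ^ 2) := fun j =>
            ENNReal.ofReal_mul (by positivity)
          simp only [this]
          rw [ENNReal.tsum_mul_left, hBstar, mul_one]
  -- membership in L²
  have hmem : ∀ v : domC, MemLp (F (v : H)) 2 μ := by
    intro v
    constructor
    · exact (hFc v).aestronglyMeasurable
    · rw [eLpNorm_eq_lintegral_rpow_enorm_toReal (by norm_num) (by norm_num)]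
      have h2 : ((2 : ENNReal)).toReal = (2:ℝ) := by norm_num
      rw [h2]; simp only [enorm_eq_nnnorm]; rw [hkey v v.2]
      exact ENNReal.rpow_lt_top_of_nonneg (by norm_num) ENNReal.ofReal_ne_top
  -- the eLpNorm value
  have heLp : ∀ v : domC, eLpNorm (F (v : H)) 2 μ = ENNReal.ofReal ‖(v : H)‖ := by
    intro v
    rw [eLpNorm_eq_lintegral_rpow_enorm_toReal (by norm_num) (by norm_num)]
    have h2 : ((2 : ENNReal)).toReal = (2:ℝ) := by norm_num
    rw [h2]; simp only [enorm_eq_nnnorm]; rw [hkey v v.2]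
    rw [ENNReal.ofReal_rpow_of_nonneg (by positivity) (by norm_num)]
    congr 1
    rw [← Real.rpow_natCast ‖(v:H)‖ 2, ← Real.rpow_mul (norm_nonneg _)]
    norm_num
  -- the densely defined isometry
  set Wd : domC →ₗ[ℂ] Lp V 2 μ :=
    { toFun := fun v => (hmem v).toLp (F (v : H))
      map_add' := by
        intro x y
        apply Lp.ext
        filter_upwards [(hmem (x + y)).coeFn_toLp, (hmem x).coeFn_toLp,
          (hmem y).coeFn_toLp, Lp.coeFn_add ((hmem x).toLp _) ((hmem y).toLp _)]
          with g e1 e2 e3 e4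
        rw [e1, e4, _root_.Pi.add_apply, e2, e3, hF]
        simp only [Submodule.coe_add, map_add, smul_add]
      map_smul' := by
        intro c x
        simp only [RingHom.id_apply]
        apply Lp.ext
        filter_upwards [(hmem (c • x)).coeFn_toLp, (hmem x).coeFn_toLp,
          Lp.coeFn_smul c ((hmem x).toLp _)] with g e1 e2 e3
        rw [e1, e3, _root_.Pi.smul_apply, e2, hF]
        simp only [Submodule.coe_smul]
        rw [C.map_smul, (adjoint (U g)).map_smul, B.map_smul, smul_comm] } with hWd
  have hWdnorm : ∀ v : domC, ‖Wd v‖ = ‖v‖ := by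
    intro v
    rw [hWd]
    simp only [LinearMap.coe_mk, AddHom.coe_mk]
    rw [Lp.norm_toLp, heLp, ENNReal.toReal_ofReal (norm_nonneg _)]
    rfl
  set Wdc : domC →L[ℂ] Lp V 2 μ :=
    Wd.mkContinuous 1 (fun v => by rw [hWdnorm, one_mul]) with hWdc
  have hdr : DenseRange ⇑(domC.subtypeL) := hdom.denseRange_val
  set ψ : H →L[ℂ] Lp V 2 μ :=
    Wdc.extend (domC.subtypeL) with hψ
  have hψd : ∀ v : domC, ψ (v : H) = Wd v := by
    intro v
    exact ContinuousLinearMap.extend_eq Wdc (e := domC.subtypeL) hdr isUniformEmbedding_subtype_val.isUniformInducing v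
  -- ψ is isometric
  have hiso : ∀ v : H, ‖ψ v‖ = ‖v‖ := by
    have hclosed : IsClosed {v : H | ‖ψ v‖ = ‖v‖} :=
      isClosed_eq ψ.continuous.norm continuous_norm
    have hsubset : (domC : Set H) ⊆ {v : H | ‖ψ v‖ = ‖v‖} := by
      intro v hv
      have : ψ ((⟨v, hv⟩ : domC) : H) = Wd ⟨v, hv⟩ := hψd ⟨v, hv⟩
      simp only [Set.mem_setOf_eq]
      rw [show v = ((⟨v, hv⟩ : domC) : H) from rfl, this, hWdnorm]
      rfl
    intro v
    have h1 : closure (domC : Set H) ⊆ {v : H | ‖ψ v‖ = ‖v‖} :=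
      hclosed.closure_subset_iff.2 hsubset
    rw [hdom.closure_eq] at h1
    exact h1 (Set.mem_univ v)
  -- a density principle
  have dense_ext : ∀ {S : Set H}, IsClosed S → ((domC : Set H) ⊆ S) → ∀ v : H, v ∈ S := by
    intro S hSc hSs v
    have h1 : closure (domC : Set H) ⊆ S := hSc.closure_subset_iff.2 hSs
    rw [hdom.closure_eq] at h1
    exact h1 (Set.mem_univ v)
  -- ψ agrees a.e. with F on domC
  have hψae : ∀ v ∈ domC, (ψ v : G → V) =ᵐ[μ] F v := by
    intro v hv
    have h1 : ψ v = Wd ⟨v, hv⟩ := hψd ⟨v, hv⟩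
    rw [h1]
    exact (hmem ⟨v, hv⟩).coeFn_toLp
  refine ⟨⟨ψ.toLinearMap, hiso⟩, ?_, ?_, ?_⟩
  · -- property (a)
    intro v hv
    filter_upwards [hψae v hv] with g hg
    exact hg
  · -- property (b): Pi invariance
    intro v
    have hclosed : IsClosed {v : H | Pi (ψ v) = ψ v} :=
      isClosed_eq (Pi.continuous.comp ψ.continuous) ψ.continuous
    refine dense_ext hclosed ?_ v
    intro v hv
    simp only [Set.mem_setOf_eq]
    have hae := hψae v hv
    -- transport the a.e. equality to the product
    have hnull : μ {x | ¬ ((ψ v : G → V) x = F v x)} = 0 := hae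
    obtain ⟨N, hsN, hNmeas, hN0⟩ := exists_measurable_superset_of_null hnull
    haveI : BorelSpace K := Subtype.borelSpace (K : Set G)
    have hm : Measurable (fun z : G × K => z.1 * (z.2 : G)) :=
      (continuous_fst.mul (continuous_subtype_val.comp continuous_snd)).measurable
    have hprod : ∀ᵐ (z : G × K) ∂(μ.prod ν),
        (ψ v : G → V) (z.1 * (z.2 : G)) = F v (z.1 * (z.2 : G)) := by
      rw [MeasureTheory.ae_iff]
      have hsub : {z : G × K | ¬ ((ψ v : G → V) (z.1 * (z.2 : G)) = F v (z.1 * (z.2 : G)))}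
          ⊆ (fun z : G × K => z.1 * (z.2 : G)) ⁻¹' N := fun z hz => hsN hz
      refine measure_mono_null hsub ?_
      rw [Measure.prod_apply_symm (hm hNmeas)]
      have hz : ∀ y : K, μ ((fun x : G => (x, y)) ⁻¹' ((fun z : G × K => z.1 * (z.2 : G)) ⁻¹' N)) = 0 := by
        intro y
        have hset : ((fun x : G => (x, y)) ⁻¹' ((fun z : G × K => z.1 * (z.2 : G)) ⁻¹' N))
            = (· * ((y : G))⁻¹) '' N := by
          ext x
          simp only [Set.mem_preimage, Set.mem_image]
          constructor
          · intro hx; exact ⟨x * (y : G), hx, by group⟩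
          · rintro ⟨n, hn, rfl⟩; simpa [mul_assoc] using hn
        rw [hset, hΔmod _ N hNmeas, hN0, mul_zero]
      simp only [hz]
      simp
    have haeae := Measure.ae_ae_of_ae_prod hprod
    apply Lp.ext
    filter_upwards [hPi (ψ v), haeae, hae] with g hg hgh hg2
    rw [hg, hg2]
    have step1 : ∫ h : K, σ h ((ψ v : G → V) (g * (h : G))) ∂ν
        = ∫ h : K, σ h (F v (g * (h : G))) ∂ν := by
      apply integral_congr_ae
      filter_upwards [hgh] with h he
      rw [he]
    have step2 : ∀ h : K, σ h (F v (g * (h : G))) = F v g := by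
      intro h
      rw [hF]
      simp only
      have hΔgh : Δ (g * (h : G)) = Δ g := by rw [hΔmul, hΔK, mul_one]
      have hadj2 : adjoint (U (g * (h : G))) = U ((h : G))⁻¹ * U g⁻¹ := by
        rw [hadj, mul_inv_rev, hUmul]
      rw [hΔgh, hadj2]
      rw [map_smul_of_tower]
      congr 1
      have h3 : (U ((h:G))⁻¹ * U g⁻¹) (C v) = U ((h:G))⁻¹ (U g⁻¹ (C v)) := rfl
      rw [h3]
      have h4 := congrFun (congrArg (fun (T : H →L[ℂ] V) => (T : H → V)) (hBint h))
        (U ((h : G))⁻¹ (U g⁻¹ (C v)))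
      simp only [ContinuousLinearMap.coe_comp', Function.comp_apply] at h4
      have h5 : U (h : G) (U ((h:G))⁻¹ (U g⁻¹ (C v))) = U g⁻¹ (C v) := by
        have := congrFun (congrArg (fun (T : H →L[ℂ] H) => (T : H → H)) (hUinvmul (h : G)))
          (U g⁻¹ (C v))
        simpa using this
      rw [h5] at h4
      rw [← h4, hadj]
    rw [step1]
    simp only [step2]
    rw [integral_const, probReal_univ, one_smul]
  · -- property (c): intertwining
    intro g₀
    have hclosed : IsClosed {v : H | ψ (U g₀ v) = L g₀ (ψ v)} :=
      isClosed_eq (ψ.continuous.comp (U g₀).continuous) ((L g₀).continuous.comp ψ.continuous)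
    intro v
    show ψ (U g₀ v) = L g₀ (ψ v)
    refine dense_ext hclosed ?_ v
    intro v hv
    simp only [Set.mem_setOf_eq]
    have hv' : U g₀ v ∈ domC := hCdomInv g₀ v hv
    have hae1 := hψae (U g₀ v) hv'
    have hae2 := hψae v hv
    have hcomp : (fun x => (ψ v : G → V) (g₀⁻¹ * x)) =ᵐ[μ] fun x => F v (g₀⁻¹ * x) := by
      have hmp := measurePreserving_mul_left μ g₀⁻¹
      have h' : (ψ v : G → V) =ᵐ[Measure.map (fun x : G => g₀⁻¹ * x) μ] F v := by
        rw [hmp.map_eq]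
        exact hae2
      exact MeasureTheory.ae_eq_comp (f := fun x : G => g₀⁻¹ * x)
        (hmp.measurable.aemeasurable) h'
    apply Lp.ext
    have hCU : C (U g₀ v) = ((Δ g₀ ^ ((1/2 : ℝ)) : ℝ)) • U g₀ (C v) := by
      have h1 := hCcomm g₀ v hv
      have h2 : ((Δ g₀ ^ ((1/2 : ℝ)) : ℝ)) • U g₀ (C v)
          = ((Δ g₀ ^ ((1/2 : ℝ)) : ℝ)) • ((Δ g₀ ^ (-(1/2 : ℝ)) : ℝ)) • C (U g₀ v) := by
        rw [h1]
      rw [h2, smul_smul, ← Real.rpow_add (hΔpos g₀)]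
      norm_num
    filter_upwards [hae1, hL g₀ (ψ v), hcomp] with x e1 e2 e3
    rw [e1, e2, e3]
    -- now a pointwise computation
    rw [hF]
    simp only
    rw [hCU, map_smul_of_tower, map_smul_of_tower, smul_smul]
    have hΔx : Δ (g₀⁻¹ * x) = (Δ g₀)⁻¹ * Δ x := by rw [hΔmul, hΔinv]
    have hsc2 : (Δ (g₀⁻¹ * x) ^ (-(1/2 : ℝ)) : ℝ)
        = (Δ x ^ (-(1/2 : ℝ)) : ℝ) * (Δ g₀ ^ ((1/2 : ℝ)) : ℝ) := by
      rw [hΔx, Real.mul_rpow (inv_nonneg.2 (hΔpos g₀).le) (hΔpos x).le,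
        ← Real.rpow_neg_one (Δ g₀), ← Real.rpow_mul (hΔpos g₀).le]
      ring_nf
    rw [hsc2]
    have hUeq : adjoint (U x) (U g₀ (C v)) = adjoint (U (g₀⁻¹ * x)) (C v) := by
      rw [hadj, hadj, mul_inv_rev, inv_inv, hUmul]
      rfl
    rw [hUeq]
end
end
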